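/- Let (D, ω) be a nonnegatively weighted digraph and L = v_1...v_n a weighted local median order of (D, ω) (an order satisfying the feedback property). If L has no bad vertex, then ω(N^+(v_n)) ≤ ω(G_L), where G_L is the set of good vertices of L; in particular v_n has the weighted SNP since G_L ⊆ N^{++}(v_n). -/

import Mathlib

variable {V : Type*}

/-- Out-neighborhood of `v`. -/
def Nplus (A : V → V → Prop) (v : V) : Set V := {u | A v u}

/-- In-neighborhood of `v`. -/
def Nminus (A : V → V → Prop) (v : V) : Set V := {u | A u v}

/-- Second out-neighborhood: vertices at directed distance exactly 2 from `v`. -/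
def Npp (A : V → V → Prop) (v : V) : Set V :=
  {u | u ≠ v ∧ ¬ A v u ∧ ∃ w, A v w ∧ A w u}

/-- The second neighborhood property. -/
def SNP (A : V → V → Prop) (v : V) : Prop := (Nplus A v).ncard ≤ (Npp A v).ncard

/-- A digraph (given by its arc relation) has no digons: no 2-cycles (this also rules out loops when stated for `u = v`). -/
def NoDigons (A : V → V → Prop) : Prop := ∀ u v, ¬ (A u v ∧ A v u)

/-- A tournament: an orientation of a complete graph. -/
def IsTournament (A : V → V → Prop) : Prop :=
  (∀ v, ¬ A v v) ∧ ∀ u v : V, u ≠ v → (A u v ↔ ¬ A v u)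

/-- `u v` is a missing edge: distinct and non-adjacent. -/
def MissingEdge (A : V → V → Prop) (u v : V) : Prop := u ≠ v ∧ ¬ A u v ∧ ¬ A v u

/-- `x₁y₁` loses to `x₂y₂` (with this labelling of endpoints). -/
def LosesAt (A : V → V → Prop) (x₁ y₁ x₂ y₂ : V) : Prop :=
  A x₁ x₂ ∧ ¬ A x₁ y₂ ∧ y₂ ∉ Npp A x₁ ∧ A y₁ y₂ ∧ ¬ A y₁ x₂ ∧ x₂ ∉ Npp A y₁

/-- The losing relation between (unordered) missing edges: the arcs of the dependency digraph. -/
def EdgeLoses (A : V → V → Prop) (e e' : Sym2 V) : Prop :=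
  ∃ x₁ y₁ x₂ y₂, e = s(x₁, y₁) ∧ e' = s(x₂, y₂) ∧
    MissingEdge A x₁ y₁ ∧ MissingEdge A x₂ y₂ ∧ LosesAt A x₁ y₁ x₂ y₂
/-- An order of the vertices satisfying the (weighted) feedback property. -/
def FeedbackOrder {n : ℕ} (A : V → V → Prop) (ω : V → ℝ) (L : Fin n ≃ V) : Prop :=
  ∀ i j : Fin n, i ≤ j →
    (∑ᶠ k ∈ {k : Fin n | i ≤ k ∧ k ≤ j ∧ A (L k) (L i)}, ω (L k)) ≤
      (∑ᶠ k ∈ {k : Fin n | i ≤ k ∧ k ≤ j ∧ A (L i) (L k)}, ω (L k)) ∧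
    (∑ᶠ k ∈ {k : Fin n | i ≤ k ∧ k ≤ j ∧ A (L j) (L k)}, ω (L k)) ≤
      (∑ᶠ k ∈ {k : Fin n | i ≤ k ∧ k ≤ j ∧ A (L k) (L j)}, ω (L k))

/-- The set of good vertices of an order with last (feed) vertex `L last`:
vertices `v = L j` other than the feed vertex, not out-neighbors of the feed
vertex, such that `L last → L i → L j` for some `i ≤ j`. -/
def goodSet {n : ℕ} (A : V → V → Prop) (L : Fin n ≃ V) (last : Fin n) : Set V :=
  {v | v ≠ L last ∧ ¬ A (L last) v ∧
    ∃ i j : Fin n, i ≤ j ∧ L j = v ∧ A (L last) (L i) ∧ A (L i) v}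

/-- if a weighted local median order has no bad vertex, then
`ω(N⁺(vₙ)) ≤ ω(G_L)`; in particular, since `G_L ⊆ N⁺⁺(vₙ)`, the feed vertex
has the weighted SNP. -/
theorem no_bad_vertex_weighted_SNP [Fintype V]
    (A : V → V → Prop) (hA : NoDigons A)
    (ω : V → ℝ) (hω : ∀ v, 0 ≤ ω v)
    {n : ℕ} (hn : 0 < n) (L : Fin n ≃ V) (hL : FeedbackOrder A ω L)
    (last : Fin n) (hlast : (last : ℕ) = n - 1)
    (hNoBad : ∀ j : Fin n, j ≠ last → ¬ A (L last) (L j) → L j ∈ goodSet A L last) :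
    (∑ᶠ v ∈ Nplus A (L last), ω v) ≤ (∑ᶠ v ∈ goodSet A L last, ω v) ∧
    goodSet A L last ⊆ Npp A (L last) ∧
    (∑ᶠ v ∈ Nplus A (L last), ω v) ≤ (∑ᶠ v ∈ Npp A (L last), ω v) := by
  classical
  haveI : NeZero n := ⟨hn.ne'⟩
  -- monotonicity of weighted sums over subsets
  have mono : ∀ s t : Set V, s ⊆ t → (∑ᶠ v ∈ s, ω v) ≤ ∑ᶠ v ∈ t, ω v := by
    intro s t hst
    rw [finsum_mem_eq_sum _ (s.toFinite.inter_of_left _),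
      finsum_mem_eq_sum _ (t.toFinite.inter_of_left _)]
    exact Finset.sum_le_sum_of_subset_of_nonneg
      (Set.Finite.toFinset_subset_toFinset.mpr (Set.inter_subset_inter_left _ hst))
      (fun v _ _ => hω v)
  -- every index is ≤ last
  have hle : ∀ k : Fin n, k ≤ last := by
    intro k
    have : (k : ℕ) ≤ n - 1 := Nat.le_pred_of_lt k.isLt
    exact Fin.le_def.mpr (by omega)
  -- identify the indexed sets with the neighborhoods
  have himg1 : L '' {k : Fin n | 0 ≤ k ∧ k ≤ last ∧ A (L last) (L k)}
      = Nplus A (L last) := by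
    ext v
    constructor
    · rintro ⟨k, ⟨-, -, hk⟩, rfl⟩; exact hk
    · intro hv
      exact ⟨L.symm v, ⟨Fin.zero_le _, hle _, by simpa [Nplus] using hv⟩, by simp⟩
  have himg2 : L '' {k : Fin n | 0 ≤ k ∧ k ≤ last ∧ A (L k) (L last)}
      = Nminus A (L last) := by
    ext v
    constructor
    · rintro ⟨k, ⟨-, -, hk⟩, rfl⟩; exact hk
    · intro hv
      exact ⟨L.symm v, ⟨Fin.zero_le _, hle _, by simpa [Nminus] using hv⟩, by simp⟩
  have hinj : Function.Injective L := L.injective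
  -- feedback property on the whole interval
  have key := (hL 0 last (hle _)).2
  have hkey : (∑ᶠ v ∈ Nplus A (L last), ω v) ≤ ∑ᶠ v ∈ Nminus A (L last), ω v := by
    rw [← himg1, ← himg2, finsum_mem_image (hinj.injOn), finsum_mem_image (hinj.injOn)]
    have h0 : ∀ k : Fin n, (0 : Fin n) ≤ k := fun k => Fin.zero_le k
    convert key using 3
  -- in-neighbors are good
  have hsub : Nminus A (L last) ⊆ goodSet A L last := by
    intro v hv
    have hvne : v ≠ L last := by
      intro heq; rw [heq] at hv; exact hA _ _ ⟨hv, hv⟩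
    have hnotout : ¬ A (L last) v := fun h => hA (L last) v ⟨h, hv⟩
    have hj : L.symm v ≠ last := by
      intro h
      apply hvne
      rw [← h]; simp
    have := hNoBad (L.symm v) hj (by simpa using hnotout)
    simpa using this
  have hgood : goodSet A L last ⊆ Npp A (L last) := by
    rintro v ⟨hv1, hv2, i, j, hij, hjv, hAi, hAv⟩
    exact ⟨hv1, hv2, L i, hAi, hAv⟩
  refine ⟨hkey.trans (mono _ _ hsub), hgood, hkey.trans ((mono _ _ hsub).trans (mono _ _ hgood))⟩
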